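/- (Minimum of two solutions of a perturbed ODE with continuous drift is a solution.) Let b : ℝ → ℝ be continuous, let B : [0,1] → ℝ be continuous with B_0 = 0, let x ∈ ℝ, and let X¹, X² : [0,1] → ℝ be continuous functions satisfying X^i_t = x + ∫_0^t b(X^i_r) dr + B_t for all t ∈ [0,1] and i = 1, 2. Then the function Y_t := min(X¹_t, X²_t) satisfies Y_t = x + ∫_0^t b(Y_r) dr + B_t for all t ∈ [0,1]. -/

import Mathlib

open MeasureTheory intervalIntegral

private lemma ftc_icc (f : ℝ → ℝ) (hf : ContinuousOn f (Set.Icc (0:ℝ) 1)) {t : ℝ}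
    (ht : t ∈ Set.Icc (0:ℝ) 1) :
    HasDerivWithinAt (fun u => ∫ r in (0:ℝ)..u, f r) (f t) (Set.Icc (0:ℝ) 1) t := by
  haveI : Fact (t ∈ Set.Icc (0:ℝ) 1) := ⟨ht⟩
  exact integral_hasDerivWithinAt_right
    ((hf.mono (Set.Icc_subset_Icc le_rfl ht.2)).intervalIntegrable_of_Icc ht.1)
    (hf.stronglyMeasurableAtFilter_nhdsWithin measurableSet_Icc t)
    (hf t ht)

/-- **The minimum of two solutions of a perturbed ODE with continuous drift is again a
solution.** -/
theorem min_of_two_solutions_is_solution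
    (b : ℝ → ℝ) (hb : Continuous b)
    (B : ℝ → ℝ) (hBcont : ContinuousOn B (Set.Icc (0:ℝ) 1)) (hB0 : B 0 = 0)
    (x : ℝ) (X₁ X₂ : ℝ → ℝ)
    (hX₁cont : ContinuousOn X₁ (Set.Icc (0:ℝ) 1))
    (hX₂cont : ContinuousOn X₂ (Set.Icc (0:ℝ) 1))
    (hX₁ : ∀ t ∈ Set.Icc (0:ℝ) 1, X₁ t = x + (∫ r in (0:ℝ)..t, b (X₁ r)) + B t)
    (hX₂ : ∀ t ∈ Set.Icc (0:ℝ) 1, X₂ t = x + (∫ r in (0:ℝ)..t, b (X₂ r)) + B t) :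
    ∀ t ∈ Set.Icc (0:ℝ) 1,
      min (X₁ t) (X₂ t) = x + (∫ r in (0:ℝ)..t, b (min (X₁ r) (X₂ r))) + B t := by
  set Y : ℝ → ℝ := fun t => min (X₁ t) (X₂ t) with hYdef
  have hYcont : ContinuousOn Y (Set.Icc (0:ℝ) 1) := hX₁cont.inf hX₂cont
  have hbX₁ : ContinuousOn (fun r => b (X₁ r)) (Set.Icc (0:ℝ) 1) := hb.comp_continuousOn hX₁cont
  have hbX₂ : ContinuousOn (fun r => b (X₂ r)) (Set.Icc (0:ℝ) 1) := hb.comp_continuousOn hX₂cont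
  have hbY : ContinuousOn (fun r => b (Y r)) (Set.Icc (0:ℝ) 1) := hb.comp_continuousOn hYcont
  set g : ℝ → ℝ := fun r => b (X₁ r) - b (X₂ r) with hgdef
  set φ : ℝ → ℝ := fun r => b (X₁ r) - b (Y r) with hφdef
  have hgcont : ContinuousOn g (Set.Icc (0:ℝ) 1) := hbX₁.sub hbX₂
  have hφcont : ContinuousOn φ (Set.Icc (0:ℝ) 1) := hbX₁.sub hbY
  set Z : ℝ → ℝ := fun s => ∫ r in (0:ℝ)..s, g r with hZdef
  set F : ℝ → ℝ := fun s => ∫ r in (0:ℝ)..s, φ r with hFdef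
  -- integrability helpers
  have hint : ∀ (f : ℝ → ℝ), ContinuousOn f (Set.Icc (0:ℝ) 1) → ∀ t ∈ Set.Icc (0:ℝ) 1,
      IntervalIntegrable f volume 0 t := fun f hf t ht =>
    (hf.mono (Set.Icc_subset_Icc le_rfl ht.2)).intervalIntegrable_of_Icc ht.1
  have hZeq : ∀ t ∈ Set.Icc (0:ℝ) 1, Z t = X₁ t - X₂ t := by
    intro t ht
    have hsub : Z t = (∫ r in (0:ℝ)..t, b (X₁ r)) - ∫ r in (0:ℝ)..t, b (X₂ r) :=
      integral_sub (hint _ hbX₁ t ht) (hint _ hbX₂ t ht)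
    rw [hsub, hX₁ t ht, hX₂ t ht]; ring
  have hFeq : ∀ t ∈ Set.Icc (0:ℝ) 1,
      F t = (∫ r in (0:ℝ)..t, b (X₁ r)) - ∫ r in (0:ℝ)..t, b (Y r) := fun t ht =>
    integral_sub (hint _ hbX₁ t ht) (hint _ hbY t ht)
  have hZderiv : ∀ t ∈ Set.Icc (0:ℝ) 1, HasDerivWithinAt Z (g t) (Set.Icc (0:ℝ) 1) t :=
    fun t ht => ftc_icc g hgcont ht
  have hFderiv : ∀ t ∈ Set.Icc (0:ℝ) 1, HasDerivWithinAt F (φ t) (Set.Icc (0:ℝ) 1) t :=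
    fun t ht => ftc_icc φ hφcont ht
  -- key derivative computation for the positive part of Z
  have hP : ∀ t ∈ Set.Icc (0:ℝ) 1,
      HasDerivWithinAt (fun s => max (Z s) 0) (φ t) (Set.Icc (0:ℝ) 1) t := by
    intro t ht
    have hZt := hZderiv t ht
    have hZc : ContinuousWithinAt Z (Set.Icc (0:ℝ) 1) t := hZt.continuousWithinAt
    rcases lt_trichotomy (Z t) 0 with h | h | h
    · -- Z t < 0 : locally max = 0, and Y = X₁ near t so φ t = 0
      have hx12 : X₁ t < X₂ t := by have := hZeq t ht; linarith
      have hφt : φ t = 0 := by simp [hφdef, hYdef, min_eq_left hx12.le]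
      have hev : (fun s => max (Z s) 0) =ᶠ[nhdsWithin t (Set.Icc (0:ℝ) 1)] fun _ => (0:ℝ) := by
        filter_upwards [hZc.eventually
          (isOpen_Iio.eventually_mem (show Z t ∈ Set.Iio (0:ℝ) from h))] with s hs
        exact max_eq_right (le_of_lt hs)
      rw [hφt]
      exact (hasDerivWithinAt_const t _ (0:ℝ)).congr_of_eventuallyEq hev
        (by simp [max_eq_right h.le])
    · -- Z t = 0 : squeeze
      have hx12 : X₁ t = X₂ t := by have := hZeq t ht; linarith
      have hφt : φ t = 0 := by simp [hφdef, hYdef, min_eq_left hx12.le]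
      have hgt : g t = 0 := by simp [hgdef, hx12]
      rw [hφt, hasDerivWithinAt_iff_isLittleO]
      have hz := hZt
      rw [hasDerivWithinAt_iff_isLittleO, hgt] at hz
      have hO : (fun s => max (Z s) 0 - max (Z t) 0 - (s - t) • (0:ℝ))
          =O[nhdsWithin t (Set.Icc (0:ℝ) 1)] fun s => Z s - Z t - (s - t) • (0:ℝ) := by
        apply Asymptotics.isBigO_of_le
        intro s
        rw [h]
        simp only [max_self, sub_zero, smul_eq_mul, mul_zero, Real.norm_eq_abs]
        rcases le_total (Z s) 0 with hzs | hzs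
        · rw [max_eq_right hzs]; simp
        · rw [max_eq_left hzs]
      exact hO.trans_isLittleO hz
    · -- Z t > 0 : locally max = Z, and Y = X₂ near t so φ t = g t
      have hx12 : X₂ t < X₁ t := by have := hZeq t ht; linarith
      have hφt : φ t = g t := by simp [hφdef, hgdef, hYdef, min_eq_right hx12.le]
      have hev : (fun s => max (Z s) 0) =ᶠ[nhdsWithin t (Set.Icc (0:ℝ) 1)] Z := by
        filter_upwards [hZc.eventually
          (isOpen_Ioi.eventually_mem (show Z t ∈ Set.Ioi (0:ℝ) from h))] with s hs
        exact max_eq_left (le_of_lt hs)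
      rw [hφt]
      exact hZt.congr_of_eventuallyEq hev (max_eq_left h.le)
  -- the difference has zero derivative, hence is constant
  have hD : ∀ t ∈ Set.Icc (0:ℝ) 1,
      HasDerivWithinAt (fun s => max (Z s) 0 - F s) 0 (Set.Icc (0:ℝ) 1) t := by
    intro t ht
    have := (hP t ht).sub (hFderiv t ht); rw [sub_self] at this; exact this
  have hDcont : ContinuousOn (fun s => max (Z s) 0 - F s) (Set.Icc (0:ℝ) 1) :=
    fun t ht => (hD t ht).continuousWithinAt
  have hDright : ∀ t ∈ Set.Ico (0:ℝ) 1,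
      HasDerivWithinAt (fun s => max (Z s) 0 - F s) 0 (Set.Ici t) t := by
    intro t ht
    apply (hD t ⟨ht.1, ht.2.le⟩).mono_of_mem_nhdsWithin
    have h1 : Set.Ici t ∩ Set.Iio 1 ∈ nhdsWithin t (Set.Ici t) :=
      Filter.inter_mem self_mem_nhdsWithin
        (mem_nhdsWithin_of_mem_nhds (Iio_mem_nhds ht.2))
    exact Filter.mem_of_superset h1 fun s hs => ⟨le_trans ht.1 hs.1, hs.2.le⟩
  have hconst := constant_of_has_deriv_right_zero hDcont hDright
  have hD0 : max (Z 0) 0 - F 0 = 0 := by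
    simp [hZdef, hFdef, intervalIntegral.integral_same]
  -- conclude
  intro t ht
  have hPt : max (Z t) 0 = F t := by
    have := hconst t ht
    rw [hD0] at this
    linarith
  have hmin : min (X₁ t) (X₂ t) = X₁ t - max (X₁ t - X₂ t) 0 := by
    rcases le_total (X₁ t) (X₂ t) with hle | hle
    · rw [min_eq_left hle, max_eq_right (by linarith)]; ring
    · rw [min_eq_right hle, max_eq_left (by linarith)]; ring
  rw [hmin, ← hZeq t ht, hPt, hFeq t ht, hX₁ t ht]
  ring
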